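/- On the elliptic curve E : y² = x³ − x² − 6x (that is, y² = x(x+2)(x−3)) over ℚ, the point P = (−1, 2) has infinite order; moreover, for every nonzero integer n, writing x for the x-coordinate of the point 2nP, the rational number (x + 1)·(x + 2209/4225) is a sum of two squares of rational numbers. (Here −1 is the x-coordinate of P and −2209/4225 is the x-coordinate of 3P.) -/

import Mathlib

open WeierstrassCurve WeierstrassCurve.Affine

/-- The `x`-coordinate of a point on a Weierstrass curve in affine coordinates,
with junk value `0` for the point at infinity. -/
noncomputable def xcoord {F : Type*} [Field F] {W : WeierstrassCurve.Affine F} :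
    W.Point → F
  | .zero => 0
  | @WeierstrassCurve.Affine.Point.some _ _ _ x _ _ => x

/-- The elliptic curve `y² = x³ − x² − 6x`, i.e. `y² = x(x+2)(x−3)`, over `ℚ`. -/
def E3 : WeierstrassCurve ℚ := ⟨0, -1, 0, -6, 0⟩

@[simp] lemma E3_a₁ : E3.toAffine.a₁ = 0 := rfl
@[simp] lemma E3_a₂ : E3.toAffine.a₂ = -1 := rfl
@[simp] lemma E3_a₃ : E3.toAffine.a₃ = 0 := rfl
@[simp] lemma E3_a₄ : E3.toAffine.a₄ = -6 := rfl
@[simp] lemma E3_a₆ : E3.toAffine.a₆ = 0 := rfl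

@[simp] lemma xcoord_some {x y : ℚ} (h : E3.toAffine.Nonsingular x y) :
    xcoord (Point.some _ _ h) = x := rfl

lemma E3_equation {x y : ℚ} (h : E3.toAffine.Equation x y) :
    y ^ 2 = x ^ 3 - x ^ 2 - 6 * x := by
  have := (WeierstrassCurve.Affine.equation_iff (W := E3.toAffine) x y).mp h
  simp only [E3_a₁, E3_a₂, E3_a₃, E3_a₄, E3_a₆] at this
  linarith

lemma E3_negY (x y : ℚ) : E3.toAffine.negY x y = -y := by
  simp [WeierstrassCurve.Affine.negY]

/-- valuation facts for `x` with `v₂ x ≤ -2`. -/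
lemma val_facts {x : ℚ} (hv : padicValRat 2 x ≤ -2) :
    x ≠ 0 ∧ (x ^ 2 - x - 6 ≠ 0 ∧ padicValRat 2 (x ^ 2 - x - 6) = 2 * padicValRat 2 x) ∧
      (x ^ 2 + 6 ≠ 0 ∧ padicValRat 2 (x ^ 2 + 6) = 2 * padicValRat 2 x) := by
  have hx : x ≠ 0 := by
    intro h; rw [h, padicValRat.zero] at hv; norm_num at hv
  have hv2 : padicValRat 2 (x ^ 2) = 2 * padicValRat 2 x := by
    rw [padicValRat.pow (p := 2) x]; push_cast; ring
  have hv6 : (0 : ℤ) ≤ padicValRat 2 (6 : ℚ) := by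
    have : ((6 : ℕ) : ℚ) = (6 : ℚ) := by norm_num
    rw [← this]; exact zero_le_padicValRat_of_nat (p := 2) 6
  have hx2 : x ^ 2 ≠ 0 := pow_ne_zero 2 hx
  have hx26 : x ^ 2 + 6 ≠ 0 := by positivity
  have hvx26 : padicValRat 2 (x ^ 2 + 6) = 2 * padicValRat 2 x := by
    rw [padicValRat.add_eq_min hx26 hx2 (by norm_num) (by rw [hv2]; intro h; omega)]
    rw [hv2]; exact min_eq_left (by omega)
  have hx6 : x + 6 ≠ 0 := by
    intro h
    have hx' : x = -6 := by linarith
    rw [hx', padicValRat.neg] at hv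
    have : ((6 : ℕ) : ℚ) = (6 : ℚ) := by norm_num
    rw [← this] at hv
    have := zero_le_padicValRat_of_nat (p := 2) 6
    omega
  have hvx6 : padicValRat 2 (x + 6) = padicValRat 2 x := by
    rw [padicValRat.add_eq_min hx6 hx (by norm_num) (by intro h; omega)]
    exact min_eq_left (by omega)
  have hxx6 : x ^ 2 - x - 6 ≠ 0 := by
    intro h
    have h2 : x ^ 2 = x + 6 := by linarith
    have := congrArg (padicValRat 2) h2
    rw [hv2, hvx6] at this
    omega
  have hvxx6 : padicValRat 2 (x ^ 2 - x - 6) = 2 * padicValRat 2 x := by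
    have hrw : x ^ 2 - x - 6 = x ^ 2 + (-(x + 6)) := by ring
    rw [hrw] at hxx6 ⊢
    rw [padicValRat.add_eq_min hxx6 hx2 (neg_ne_zero.mpr hx6)
      (by rw [hv2, padicValRat.neg, hvx6]; intro h; omega)]
    rw [hv2, padicValRat.neg, hvx6]
    exact min_eq_left (by omega)
  exact ⟨hx, ⟨hxx6, hvxx6⟩, hx26, hvx26⟩

lemma val_double {x y : ℚ} (hv : padicValRat 2 x ≤ -2)
    (heq : y ^ 2 = x ^ 3 - x ^ 2 - 6 * x) :
    y ≠ 0 ∧ padicValRat 2 (((x ^ 2 + 6) / (2 * y)) ^ 2) = padicValRat 2 x - 2 := by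
  obtain ⟨hx, ⟨hxx6, hvxx6⟩, hx26, hvx26⟩ := val_facts hv
  have hfac : y ^ 2 = x * (x ^ 2 - x - 6) := by rw [heq]; ring
  have hy : y ≠ 0 := by
    intro h
    rw [h] at hfac
    exact (mul_ne_zero hx hxx6) (by linarith)
  have h2y : 2 * padicValRat 2 y = 3 * padicValRat 2 x := by
    have := congrArg (padicValRat 2) hfac
    rw [padicValRat.pow (p := 2) y, padicValRat.mul (p := 2) hx hxx6, hvxx6] at this
    push_cast at this
    omega
  have h2 : padicValRat 2 (2 : ℚ) = 1 := by
    have := padicValRat.self (p := 2) (by norm_num)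
    simpa using this
  have h2yne : (2 : ℚ) * y ≠ 0 := mul_ne_zero two_ne_zero hy
  have hdiv : (x ^ 2 + 6) / (2 * y) ≠ 0 := div_ne_zero hx26 h2yne
  constructor
  · exact hy
  · rw [padicValRat.pow (p := 2) ((x ^ 2 + 6) / (2 * y)), padicValRat.div (p := 2) hx26 h2yne,
      padicValRat.mul (p := 2) two_ne_zero hy, h2, hvx26]
    push_cast
    omega

lemma double_eq {x y : ℚ} (h : E3.toAffine.Nonsingular x y) (hy : y ≠ 0) :
    ∃ (x' y' : ℚ) (h' : E3.toAffine.Nonsingular x' y'),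
      (2 : ℤ) • (Point.some _ _ h) = Point.some _ _ h' ∧ x' = ((x ^ 2 + 6) / (2 * y)) ^ 2 := by
  have hyne : y ≠ E3.toAffine.negY x y := by
    rw [E3_negY]; intro hc; apply hy; linarith
  refine ⟨_, _, WeierstrassCurve.Affine.nonsingular_add h h (fun hxy => hyne hxy.2),
    by rw [two_zsmul]; exact WeierstrassCurve.Affine.Point.add_self_of_Y_ne hyne, ?_⟩
  have heq := E3_equation h.1
  rw [WeierstrassCurve.Affine.slope_of_Y_ne rfl hyne, E3_negY]
  simp only [WeierstrassCurve.Affine.addX, E3_a₁, E3_a₂, E3_a₄]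
  rw [show y - -y = 2 * y from by ring]
  have h2y : (2 : ℚ) * y ≠ 0 := mul_ne_zero two_ne_zero hy
  field_simp
  linear_combination (4 - 8 * x) * heq

theorem stmt3 :
    ∃ h : E3.toAffine.Nonsingular (-1) 2,
      (∀ n : ℤ, n ≠ 0 → n • (WeierstrassCurve.Affine.Point.some _ _ h) ≠ 0) ∧
      (∀ n : ℤ, n ≠ 0 →
        ∃ r s : ℚ,
          (xcoord ((2 * n) • (WeierstrassCurve.Affine.Point.some _ _ h)) + 1) *
            (xcoord ((2 * n) • (WeierstrassCurve.Affine.Point.some _ _ h)) + 2209 / 4225) =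
          r ^ 2 + s ^ 2) := by
  have hP : E3.toAffine.Nonsingular (-1) 2 := by
    rw [WeierstrassCurve.Affine.nonsingular_iff, WeierstrassCurve.Affine.equation_iff]
    simp only [E3_a₁, E3_a₂, E3_a₃, E3_a₄, E3_a₆, E3_negY]
    norm_num
  refine ⟨hP, ?_⟩
  set P : E3.toAffine.Point := Point.some _ _ hP with hPdef
  -- the key tower: for all k, 2^(k+1) • P is affine with v₂ of x-coordinate = -4 - 2k
  have tower : ∀ k : ℕ, ∃ (x y : ℚ) (h' : E3.toAffine.Nonsingular x y),
      ((2 : ℤ) ^ (k + 1)) • P = Point.some _ _ h' ∧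
        padicValRat 2 x = -4 - 2 * (k : ℤ) := by
    intro k
    induction k with
    | zero =>
      obtain ⟨x', y', h', heq, hx'⟩ := double_eq hP (by norm_num)
      refine ⟨x', y', h', by simpa using heq, ?_⟩
      rw [hx']
      have : (((-1 : ℚ) ^ 2 + 6) / (2 * 2)) ^ 2 = ((7 : ℚ) / 4) ^ 2 := by norm_num
      rw [this, padicValRat.pow (p := 2) ((7 : ℚ) / 4), padicValRat.div (p := 2) (by norm_num) (by norm_num)]
      have h7 : padicValRat 2 (7 : ℚ) = 0 := by
        have : ((7 : ℕ) : ℚ) = (7 : ℚ) := by norm_num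
        rw [← this, padicValRat.of_nat]
        norm_cast
        exact padicValNat.eq_zero_of_not_dvd (by norm_num)
      have h4 : padicValRat 2 (4 : ℚ) = 2 := by
        have : ((4 : ℕ) : ℚ) = (4 : ℚ) := by norm_num
        rw [← this, padicValRat.of_nat]
        norm_cast
        rw [show (4 : ℕ) = 2 ^ 2 by norm_num]
        exact padicValNat.prime_pow 2
      rw [h7, h4]; norm_num
    | succ k ih =>
      obtain ⟨x, y, h', heq, hval⟩ := ih
      have hv : padicValRat 2 x ≤ -2 := by omega
      have hcurve := E3_equation h'.1
      obtain ⟨hy, hvd⟩ := val_double hv hcurve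
      obtain ⟨x', y', h'', heq', hx'⟩ := double_eq h' hy
      refine ⟨x', y', h'', ?_, ?_⟩
      · rw [show ((2 : ℤ) ^ (k + 1 + 1)) = 2 * 2 ^ (k + 1) by ring, mul_smul, heq, heq']
      · rw [hx', hvd, hval]; push_cast; ring
    -- end tower
  have part1 : ∀ n : ℤ, n ≠ 0 → n • P ≠ 0 := by
    intro n hn hzero
    have hfin : IsOfFinAddOrder P := isOfFinAddOrder_iff_zsmul_eq_zero.mpr ⟨n, hn, hzero⟩
    have hfinset := hfin.finite_multiples
    set f : ℕ → E3.toAffine.Point := fun k => ((2 : ℤ) ^ (k + 1)) • P with hf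
    have hmem : ∀ k, f k ∈ (AddSubmonoid.multiples P : Set E3.toAffine.Point) := by
      intro k
      exact ⟨2 ^ (k + 1), by rw [hf]; push_cast [← natCast_zsmul]; norm_num⟩
    have hinj : Function.Injective f := by
      intro k₁ k₂ hk
      obtain ⟨x₁, y₁, h₁, he₁, hv₁⟩ := tower k₁
      obtain ⟨x₂, y₂, h₂, he₂, hv₂⟩ := tower k₂
      rw [hf] at hk
      simp only at hk
      rw [he₁, he₂] at hk
      have := congrArg xcoord hk
      rw [xcoord_some, xcoord_some] at this
      rw [this] at hv₁
      rw [hv₂] at hv₁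
      omega
    exact (Set.infinite_range_of_injective hinj)
      (hfinset.subset (Set.range_subset_iff.mpr hmem))
  refine ⟨part1, ?_⟩
  intro n hn
  have h1 := part1 n hn
  obtain ⟨x₀, y₀, h₀, hP0⟩ : ∃ (x y : ℚ) (h : E3.toAffine.Nonsingular x y),
      n • P = Point.some _ _ h := by
    cases hq : n • P with
    | zero => exact absurd hq h1
    | some _ _ h => exact ⟨_, _, h, rfl⟩
  have hy0 : y₀ ≠ 0 := by
    intro h0
    have h2n : (2 * n) • P = 0 := by
      rw [mul_smul, hP0, two_zsmul]
      exact WeierstrassCurve.Affine.Point.add_self_of_Y_eq (by rw [E3_negY, h0]; norm_num)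
    exact part1 (2 * n) (mul_ne_zero two_ne_zero hn) h2n
  obtain ⟨x', y', h', heq', hx'⟩ := double_eq h₀ hy0
  have hfinal : (2 * n) • P = Point.some _ _ h' := by rw [mul_smul, hP0]; exact heq'
  set a : ℚ := (x₀ ^ 2 + 6) / (2 * y₀) with ha
  refine ⟨a ^ 2 - 47 / 65, a * (47 / 65) + a, ?_⟩
  rw [hfinal, xcoord_some, hx']
  ring
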